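/- Let I be a nearly complete intersection (NCI) squarefree monomial ideal of height c in S, all of whose associated primes have height c. Let x be a variable in the support of I, let xF_1, …, xF_n (n ≥ 2) be the minimal monomial generators of I divisible by x, let J be the ideal generated by the remaining minimal generators of I lying in (F_1, …, F_n), and let K be the ideal generated by the other remaining minimal generators. Then at most one of F_1, …, F_n has degree greater than 1; moreover, if F_n has degree greater than 1, then J ⊆ (F_1, …, F_{n−1}). -/

import Mathlib

open CategoryTheory MvPolynomial

noncomputable section

/-- `dim_k Tor_i^R(M, R/mx)` : the `i`-th Betti number of the `R`-module `M`, where `R` is a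
`k`-algebra and `mx` is (the analogue of) the irrelevant maximal ideal, so that `R ⧸ mx ≅ k`. -/
def bettiGen (k : Type) [Field k] (R : Type) [CommRing R] [Algebra k R]
    (mx : Ideal R) (M : ModuleCat R) (i : ℕ) : ℕ :=
  Module.finrank k
    (RestrictScalars k R (((Tor (ModuleCat R) i).obj M).obj (ModuleCat.of R (R ⧸ mx))))

/-- The irrelevant maximal ideal `(x_1, …, x_m)` of `S = k[x_1, …, x_m]`. -/
def irrel (k : Type) [Field k] (m : ℕ) : Ideal (MvPolynomial (Fin m) k) :=
  Ideal.span (Set.range (X : Fin m → MvPolynomial (Fin m) k))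

/-- `β_i(S/I) = dim_k Tor_i^S(S/I, k)` for an ideal `I ⊆ S = k[x_1, …, x_m]`. -/
def betti (k : Type) [Field k] (m : ℕ) (I : Ideal (MvPolynomial (Fin m) k)) (i : ℕ) : ℕ :=
  bettiGen k (MvPolynomial (Fin m) k) (irrel k m)
    (ModuleCat.of _ (MvPolynomial (Fin m) k ⧸ I)) i

/-- `β(S/I) = Σ_i β_i(S/I)`, the (finite) total Betti number, valued in `ℕ∞`. -/
def bettiSum (k : Type) [Field k] (m : ℕ) (I : Ideal (MvPolynomial (Fin m) k)) : ℕ∞ :=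
  ∑' i, (betti k m I i : ℕ∞)

/-- The (Krull) height of an ideal: the infimum of the heights of primes containing it. -/
def idealHeight {R : Type} [CommRing R] (I : Ideal R) : ℕ∞ :=
  ⨅ (P : PrimeSpectrum R) (_ : I ≤ P.asIdeal), Order.height P

/-- An ideal is a complete intersection iff it can be generated by a regular sequence. -/
def IsCI {R : Type} [CommRing R] (I : Ideal R) : Prop :=
  ∃ rs : List R, RingTheory.Sequence.IsRegular R rs ∧ I = Ideal.span {r | r ∈ rs}

/-- A monomial ideal: an ideal generated by monomials. -/
def IsMonomialIdeal {k : Type} [Field k] {m : ℕ} (I : Ideal (MvPolynomial (Fin m) k)) : Prop :=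
  ∃ A : Set (Fin m →₀ ℕ), I = Ideal.span ((fun a => monomial a (1 : k)) '' A)

/-- A squarefree monomial ideal: an ideal generated by squarefree monomials. -/
def IsSqFreeMonomialIdeal {k : Type} [Field k] {m : ℕ}
    (I : Ideal (MvPolynomial (Fin m) k)) : Prop :=
  ∃ A : Set (Fin m →₀ ℕ), (∀ a ∈ A, ∀ j, a j ≤ 1) ∧
    I = Ideal.span ((fun a => monomial a (1 : k)) '' A)

/-- `a` is (the exponent vector of) a minimal monomial generator of the monomial ideal `I`:
the monomial `x^a` lies in `I` but no proper monomial divisor of it does. -/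
def IsMinGen {k : Type} [Field k] {m : ℕ} (I : Ideal (MvPolynomial (Fin m) k))
    (a : Fin m →₀ ℕ) : Prop :=
  (monomial a (1 : k)) ∈ I ∧
    ∀ j, a j ≠ 0 → (monomial (a - Finsupp.single j 1) (1 : k)) ∉ I

/-- The total degree of the monomial with exponent vector `a`. -/
def expDeg {m : ℕ} (a : Fin m →₀ ℕ) : ℕ := a.sum fun _ e => e

/-- The variable `x` lies in the support of the monomial ideal `I`, i.e. it divides some
minimal monomial generator of `I`. -/
def InSupport {k : Type} [Field k] {m : ℕ} (I : Ideal (MvPolynomial (Fin m) k))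
    (x : Fin m) : Prop :=
  ∃ a, IsMinGen I a ∧ a x ≠ 0

/-- `I(x=1)` : the ideal generated by the monomials obtained from the minimal monomial
generators of `I` by substituting `1` for the variable `x`. -/
def subOne {k : Type} [Field k] {m : ℕ} (I : Ideal (MvPolynomial (Fin m) k))
    (x : Fin m) : Ideal (MvPolynomial (Fin m) k) :=
  Ideal.span ((fun a => monomial (a.erase x) (1 : k)) '' {a | IsMinGen I a})

/-- A nearly complete intersection (NCI): a squarefree monomial ideal, generated in degree
at least two, which is not a CI, but such that `I(x=1)` is a CI for every variable `x`
in the support of `I`. -/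
def IsNCI {k : Type} [Field k] {m : ℕ} (I : Ideal (MvPolynomial (Fin m) k)) : Prop :=
  IsSqFreeMonomialIdeal I ∧ (∀ a, IsMinGen I a → 2 ≤ expDeg a) ∧ ¬ IsCI I ∧
    ∀ x, InSupport I x → IsCI (subOne I x)

section Koszul

variable {R : Type} [CommRing R]

lemma ofList_ofFn_eq {n : ℕ} (r : Fin n → R) :
    Ideal.ofList (List.ofFn r) = Ideal.span (Set.range r) := by
  unfold Ideal.ofList
  congr 1
  ext x
  simp [List.mem_ofFn]

lemma smul_top_self (I : Ideal R) : (I • (⊤ : Submodule R R)) = I := by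
  rw [smul_eq_mul, Ideal.mul_top]

lemma koszul_rel : ∀ (n : ℕ) (r : Fin n → R),
    RingTheory.Sequence.IsWeaklyRegular R (List.ofFn r) →
    ∀ c : Fin n → R, (∑ l, c l * r l) = 0 → ∀ l, c l ∈ Ideal.span (Set.range r) := by
  intro n
  induction n with
  | zero => intro r _ c _ l; exact l.elim0
  | succ n ih =>
    intro r hreg c hc l
    rw [Fin.sum_univ_castSucc] at hc
    have hsplit : List.ofFn r = (List.ofFn fun i : Fin n => r i.castSucc) ++ [r (Fin.last n)] := by
      rw [List.ofFn_succ', List.concat_eq_append]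
    rw [hsplit, RingTheory.Sequence.isWeaklyRegular_append_iff] at hreg
    obtain ⟨h0, h1⟩ := hreg
    rw [RingTheory.Sequence.isWeaklyRegular_singleton_iff] at h1
    set J : Ideal R := Ideal.span (Set.range fun i : Fin n => r i.castSucc) with hJ
    rw [ofList_ofFn_eq] at h1
    have hlastmem : c (Fin.last n) * r (Fin.last n) ∈ J := by
      have heq : c (Fin.last n) * r (Fin.last n)
          = -(∑ i : Fin n, c i.castSucc * r i.castSucc) :=
        eq_neg_of_add_eq_zero_right hc
      rw [heq]
      exact neg_mem (Ideal.sum_mem _ (fun i _ => Ideal.mul_mem_left _ _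
        (Ideal.subset_span ⟨i, rfl⟩)))
    have hclast : c (Fin.last n) ∈ J := by
      have hz : r (Fin.last n) • (Submodule.Quotient.mk (c (Fin.last n)) :
          R ⧸ (J • (⊤ : Submodule R R))) = r (Fin.last n) • (0 : R ⧸ (J • (⊤ : Submodule R R))) := by
        rw [smul_zero, ← Submodule.Quotient.mk_smul, Submodule.Quotient.mk_eq_zero, smul_top_self,
          smul_eq_mul, mul_comm]
        exact hlastmem
      have hz0 := h1 hz
      rw [Submodule.Quotient.mk_eq_zero, smul_top_self] at hz0
      exact hz0
    have hmemJ : c (Fin.last n) ∈ Submodule.span R (Set.range fun i : Fin n => r i.castSucc) :=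
      hclast
    rw [Submodule.mem_span_range_iff_exists_fun] at hmemJ
    obtain ⟨d, hd⟩ := hmemJ
    have hsum' : (∑ i : Fin n, (c i.castSucc + d i * r (Fin.last n)) * r i.castSucc) = 0 := by
      have expand : (∑ i : Fin n, (c i.castSucc + d i * r (Fin.last n)) * r i.castSucc)
          = (∑ i : Fin n, c i.castSucc * r i.castSucc)
            + (∑ i : Fin n, d i * r i.castSucc) * r (Fin.last n) := by
        rw [Finset.sum_mul, ← Finset.sum_add_distrib]
        congr 1; ext i; ring
      have hd' : (∑ i : Fin n, d i * r i.castSucc) = c (Fin.last n) := by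
        rw [← hd]
        congr 1
      rw [expand, hd', hc]
    have hmem' := ih (fun i => r i.castSucc) h0 _ hsum'
    have hJle : J ≤ Ideal.span (Set.range r) := by
      apply Ideal.span_mono
      rintro x ⟨i, rfl⟩
      exact ⟨i.castSucc, rfl⟩
    have hrlast : r (Fin.last n) ∈ Ideal.span (Set.range r) :=
      Ideal.subset_span ⟨Fin.last n, rfl⟩
    refine Fin.lastCases ?_ ?_ l
    · exact hJle hclast
    · intro i
      have heq : c i.castSucc = (c i.castSucc + d i * r (Fin.last n)) - d i * r (Fin.last n) := by
        ring
      rw [heq]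
      exact sub_mem (hJle (hmem' i)) (Ideal.mul_mem_left _ _ hrlast)

end Koszul

namespace NCIAux

variable {k : Type} [Field k] {m : ℕ}

/-- span of monomials with exponents in `T` -/
def MSpan (T : Set (Fin m →₀ ℕ)) : Ideal (MvPolynomial (Fin m) k) :=
  Ideal.span ((fun e => monomial e (1 : k)) '' T)

lemma mono_mem {T : Set (Fin m →₀ ℕ)} {a : Fin m →₀ ℕ} :
    (monomial a (1 : k)) ∈ (MSpan T : Ideal (MvPolynomial (Fin m) k)) ↔ ∃ w ∈ T, w ≤ a := by
  rw [MSpan, mem_ideal_span_monomial_image]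
  simp [support_monomial]

lemma mono_mem_of_le {T : Set (Fin m →₀ ℕ)} {a b : Fin m →₀ ℕ}
    (h : (monomial a (1 : k)) ∈ (MSpan T : Ideal (MvPolynomial (Fin m) k))) (hab : a ≤ b) :
    (monomial b (1 : k)) ∈ (MSpan T : Ideal (MvPolynomial (Fin m) k)) := by
  rw [mono_mem] at h ⊢
  obtain ⟨w, hw, hwa⟩ := h
  exact ⟨w, hw, le_trans hwa hab⟩

lemma sub_single_le (a : Fin m →₀ ℕ) (j : Fin m) : a - Finsupp.single j 1 ≤ a := by
  rw [Finsupp.le_def]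
  intro i
  rw [Finsupp.tsub_apply]
  omega

lemma le_sub_single {b a : Fin m →₀ ℕ} {j : Fin m} (h : b ≤ a) (hj : b j < a j) :
    b ≤ a - Finsupp.single j 1 := by
  rw [Finsupp.le_def] at h ⊢
  intro i
  rw [Finsupp.tsub_apply, Finsupp.single_apply]
  have := h i
  by_cases hij : j = i
  · subst hij; simpa using by omega
  · simp [hij]; omega

lemma exists_lt_of_le_ne {b a : Fin m →₀ ℕ} (h : b ≤ a) (hne : b ≠ a) : ∃ j, b j < a j := by
  by_contra hc
  push_neg at hc
  exact hne (Finsupp.ext fun j => le_antisymm (Finsupp.le_def.mp h j) (hc j))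

lemma minGen_not_mem_of_lt {T : Set (Fin m →₀ ℕ)} {v b : Fin m →₀ ℕ}
    (hv : IsMinGen (MSpan T : Ideal (MvPolynomial (Fin m) k)) v) (hb : b ≤ v) (hne : b ≠ v) :
    (monomial b (1 : k)) ∉ (MSpan T : Ideal (MvPolynomial (Fin m) k)) := by
  intro hmem
  obtain ⟨j, hj⟩ := exists_lt_of_le_ne hb hne
  exact hv.2 j (by omega) (mono_mem_of_le hmem (le_sub_single hb hj))

lemma minGen_eq_of_le {T : Set (Fin m →₀ ℕ)} {u v : Fin m →₀ ℕ}
    (hu : IsMinGen (MSpan T : Ideal (MvPolynomial (Fin m) k)) u)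
    (hv : IsMinGen (MSpan T : Ideal (MvPolynomial (Fin m) k)) v) (huv : u ≤ v) : u = v := by
  by_contra hne
  exact minGen_not_mem_of_lt hv huv hne hu.1

lemma expDeg_eq_sum (a : Fin m →₀ ℕ) : expDeg a = ∑ j : Fin m, a j :=
  Finsupp.sum_fintype _ _ (fun _ => rfl)

lemma apply_le_expDeg (a : Fin m →₀ ℕ) (j : Fin m) : a j ≤ expDeg a := by
  rw [expDeg_eq_sum]
  exact Finset.single_le_sum (f := fun j => a j) (fun _ _ => Nat.zero_le _) (Finset.mem_univ j)

lemma expDeg_lt_of_lt {b a : Fin m →₀ ℕ} (hb : b ≤ a) (hne : b ≠ a) : expDeg b < expDeg a := by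
  rw [expDeg_eq_sum, expDeg_eq_sum]
  obtain ⟨j, hj⟩ := exists_lt_of_le_ne hb hne
  exact Finset.sum_lt_sum (fun i _ => Finsupp.le_def.mp hb i) ⟨j, Finset.mem_univ j, hj⟩

lemma expDeg_add (a b : Fin m →₀ ℕ) : expDeg (a + b) = expDeg a + expDeg b := by
  simp [expDeg_eq_sum, Finsupp.add_apply, Finset.sum_add_distrib]

lemma exists_minGen_le {T : Set (Fin m →₀ ℕ)} {c : Fin m →₀ ℕ}
    (h : (monomial c (1 : k)) ∈ (MSpan T : Ideal (MvPolynomial (Fin m) k))) :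
    ∃ v, IsMinGen (MSpan T : Ideal (MvPolynomial (Fin m) k)) v ∧ v ≤ c := by
  suffices H : ∀ (N : ℕ) (c : Fin m →₀ ℕ), expDeg c ≤ N →
      (monomial c (1 : k)) ∈ (MSpan T : Ideal (MvPolynomial (Fin m) k)) →
      ∃ v, IsMinGen (MSpan T : Ideal (MvPolynomial (Fin m) k)) v ∧ v ≤ c by
    exact H (expDeg c) c le_rfl h
  intro N
  induction N with
  | zero =>
    intro c hc hmem
    refine ⟨c, ⟨hmem, fun j hj _ => ?_⟩, le_rfl⟩
    have := apply_le_expDeg c j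
    omega
  | succ N ih =>
    intro c hc hmem
    by_cases hmin : ∀ j, c j ≠ 0 → (monomial (c - Finsupp.single j 1) (1 : k)) ∉
        (MSpan T : Ideal (MvPolynomial (Fin m) k))
    · exact ⟨c, ⟨hmem, hmin⟩, le_rfl⟩
    · push_neg at hmin
      obtain ⟨j, hj, hmem'⟩ := hmin
      have hlt : expDeg (c - Finsupp.single j 1) < expDeg c := by
        apply expDeg_lt_of_lt (sub_single_le c j)
        intro heq
        have h2 := DFunLike.congr_fun heq j
        rw [Finsupp.tsub_apply, Finsupp.single_apply, if_pos rfl] at h2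
        omega
      obtain ⟨v, hv, hvle⟩ := ih (c - Finsupp.single j 1) (by omega) hmem'
      exact ⟨v, hv, le_trans hvle (sub_single_le c j)⟩

lemma minGen_mem_T {T : Set (Fin m →₀ ℕ)} {v : Fin m →₀ ℕ}
    (hv : IsMinGen (MSpan T : Ideal (MvPolynomial (Fin m) k)) v) : v ∈ T := by
  obtain ⟨w, hw, hwv⟩ := mono_mem.mp hv.1
  have : w = v := by
    by_contra hne
    exact minGen_not_mem_of_lt hv hwv hne (mono_mem.mpr ⟨w, hw, le_rfl⟩)
  rwa [← this]

lemma span_minGens (T : Set (Fin m →₀ ℕ)) :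
    (MSpan T : Ideal (MvPolynomial (Fin m) k))
      = MSpan {v | IsMinGen (MSpan T : Ideal (MvPolynomial (Fin m) k)) v} := by
  apply le_antisymm
  · rw [MSpan, Ideal.span_le]
    rintro _ ⟨w, hw, rfl⟩
    have hmem : (monomial w (1 : k)) ∈ (MSpan T : Ideal (MvPolynomial (Fin m) k)) :=
      mono_mem.mpr ⟨w, hw, le_rfl⟩
    obtain ⟨v, hv, hvle⟩ := exists_minGen_le hmem
    exact mono_mem.mpr ⟨v, hv, hvle⟩
  · rw [MSpan, Ideal.span_le]
    rintro _ ⟨v, hv, rfl⟩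
    exact hv.1

lemma sqfree_finite : Set.Finite {a : Fin m →₀ ℕ | ∀ j, a j ≤ 1} := by
  have hinj : Function.Injective
      (fun a : {a : Fin m →₀ ℕ // ∀ j, a j ≤ 1} => (fun j => a.1 j : Fin m → ℕ)) := by
    intro a b hab
    exact Subtype.ext (Finsupp.ext fun j => congrFun hab j)
  have hfin : Finite {a : Fin m →₀ ℕ // ∀ j, a j ≤ 1} := by
    have : Function.Injective (fun a : {a : Fin m →₀ ℕ // ∀ j, a j ≤ 1} =>
        (fun j => (⟨a.1 j, by have := a.2 j; omega⟩ : Fin 2)) : _ → (Fin m → Fin 2)) := by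
      intro a b hab
      apply Subtype.ext
      apply Finsupp.ext
      intro j
      have := congrFun hab j
      simpa [Fin.mk.injEq] using this
    exact Finite.of_injective _ this
  exact Set.finite_coe_iff.mp hfin

lemma minGens_finite {T : Set (Fin m →₀ ℕ)} (hsq : ∀ w ∈ T, ∀ j, w j ≤ 1) :
    Set.Finite {v | IsMinGen (MSpan T : Ideal (MvPolynomial (Fin m) k)) v} :=
  Set.Finite.subset sqfree_finite (fun v hv => hsq v (minGen_mem_T hv))


open RingTheory.Sequence

set_option maxHeartbeats 2000000 in
lemma ci_no_common_var {T : Set (Fin m →₀ ℕ)} (hsq : ∀ w ∈ T, ∀ j, w j ≤ 1)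
    (hci : IsCI (MSpan T : Ideal (MvPolynomial (Fin m) k)))
    {u v : Fin m →₀ ℕ}
    (hu : IsMinGen (MSpan T : Ideal (MvPolynomial (Fin m) k)) u)
    (hv : IsMinGen (MSpan T : Ideal (MvPolynomial (Fin m) k)) v)
    (huv : u ≠ v) {j₀ : Fin m} (hju : u j₀ ≠ 0) (hjv : v j₀ ≠ 0) : False := by
  classical
  set Q : Ideal (MvPolynomial (Fin m) k) := MSpan T with hQdef
  obtain ⟨rs, hreg, hQrs⟩ := hci
  set n := rs.length with hn
  set r : Fin n → MvPolynomial (Fin m) k := fun l => rs.get l with hr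
  have hofn : List.ofFn r = rs := List.ofFn_get rs
  have hQr : Q = Ideal.span (Set.range r) := by
    rw [hQrs, ← ofList_ofFn_eq r, hofn]
  have hwr : IsWeaklyRegular (MvPolynomial (Fin m) k) (List.ofFn r) := by
    rw [hofn]; exact hreg.toIsWeaklyRegular
  -- enumerate minimal generators
  have hfin := minGens_finite (k := k) hsq
  set Fset := hfin.toFinset with hFset
  set t := Fset.card with ht
  set em := Fset.equivFin with hem
  set mg : Fin t → (Fin m →₀ ℕ) := fun i => (em.symm i : Fin m →₀ ℕ) with hmg
  have mg_min : ∀ i, IsMinGen Q (mg i) := by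
    intro i
    exact (Set.Finite.mem_toFinset hfin).mp (em.symm i).2
  have mg_inj : Function.Injective mg := by
    intro i j hij
    exact em.symm.injective (Subtype.ext hij)
  have mg_surj : ∀ w, IsMinGen Q w → ∃ i, mg i = w := by
    intro w hw
    exact ⟨em ⟨w, (Set.Finite.mem_toFinset hfin).mpr hw⟩, by simp [hmg]⟩
  -- Φ and the dimension bound t ≤ n
  set Φ : MvPolynomial (Fin m) k →ₗ[k] (Fin t → k) :=
    { toFun := fun q i => coeff (mg i) q
      map_add' := by intro a b; funext i; exact coeff_add _ _ _
      map_smul' := by intro c a; funext i; exact coeff_smul _ _ _ } with hΦ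
  set W : Submodule k (Fin t → k) := Submodule.span k (Set.range (fun l => Φ (r l))) with hW
  have key_smul : ∀ (a x : MvPolynomial (Fin m) k), x ∈ Q → Φ (a • x) = (coeff 0 a) • Φ x := by
    intro a x hx
    funext i
    have hx' : ∀ ν ∈ x.support, ∃ w ∈ T, w ≤ ν := by
      rw [hQdef, MSpan] at hx
      exact fun ν hν => mem_ideal_span_monomial_image.mp hx ν hν
    have hax : (a • x) = a * x := by rw [smul_eq_mul]
    have hgoal : coeff (mg i) (a * x) = coeff 0 a * coeff (mg i) x := by
      rw [coeff_mul]
      refine Finset.sum_eq_single_of_mem ((0 : Fin m →₀ ℕ), mg i) ?_ ?_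
      · rw [Finset.HasAntidiagonal.mem_antidiagonal, zero_add]
      · rintro ⟨p1, p2⟩ hp hpne
        rw [Finset.HasAntidiagonal.mem_antidiagonal] at hp
        by_cases hc : coeff p2 x = 0
        · simp [hc]
        · exfalso
          have hp2supp : p2 ∈ x.support := mem_support_iff.mpr hc
          obtain ⟨w, hwT, hwle⟩ := hx' p2 hp2supp
          have hmem2 : (monomial p2 (1:k)) ∈ Q := mono_mem.mpr ⟨w, hwT, hwle⟩
          have hle : p2 ≤ mg i := by
            rw [← hp]; exact le_add_self
          have hne : p2 ≠ mg i := by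
            intro h
            apply hpne
            have hp1 : p1 = 0 := by
              rw [h] at hp
              have h2 : p1 + mg i = 0 + mg i := by rw [hp, zero_add]
              exact add_right_cancel h2
            rw [hp1, h]
          exact minGen_not_mem_of_lt (mg_min i) hle hne hmem2
    show coeff (mg i) (a • x) = ((coeff 0 a) • Φ x) i
    rw [Pi.smul_apply, hax, hgoal, hΦ]
    simp only [LinearMap.coe_mk, AddHom.coe_mk, smul_eq_mul]
  have hQW : ∀ q ∈ Q, Φ q ∈ W := by
    intro q hq
    rw [hQr] at hq
    refine Submodule.span_induction ?_ ?_ ?_ ?_ hq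
    · rintro x ⟨l, rfl⟩
      exact Submodule.subset_span ⟨l, rfl⟩
    · rw [map_zero]; exact W.zero_mem
    · intro x y _ _ hx hy
      rw [map_add]; exact W.add_mem hx hy
    · intro a x hx hΦx
      have hxQ : x ∈ Q := by rw [hQr]; exact hx
      rw [key_smul a x hxQ]
      exact W.smul_mem _ hΦx
  have hsingle : ∀ i, Pi.single i (1:k) ∈ W := by
    intro i
    have h1 : Φ (monomial (mg i) 1) = Pi.single i (1:k) := by
      funext i'
      rw [hΦ]
      simp only [LinearMap.coe_mk, AddHom.coe_mk, coeff_monomial, Pi.single_apply]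
      by_cases h : i' = i
      · subst h; simp
      · have hne : mg i ≠ mg i' := fun hc => h (mg_inj hc).symm
        simp [hne, h]
    rw [← h1]
    exact hQW _ (mg_min i).1
  have hWtop : W = ⊤ := by
    rw [eq_top_iff]
    intro w _
    rw [pi_eq_sum_univ w]
    refine Submodule.sum_mem _ (fun i _ => Submodule.smul_mem _ _ ?_)
    have hps : (fun j => if i = j then (1:k) else 0) = Pi.single i (1:k) := by
      funext j
      rw [Pi.single_apply]
      by_cases h : i = j
      · simp [h]
      · rw [if_neg h, if_neg (fun hc => h hc.symm)]
    rw [hps]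
    exact hsingle i
  have htn : t ≤ n := by
    have h1 : Module.finrank k (Fin t → k) = t := by
      rw [Module.finrank_pi, Fintype.card_fin]
    have h2 : Module.finrank k W ≤ (Set.range (fun l => Φ (r l))).toFinset.card :=
      finrank_span_le_card _
    have h3 : (Set.range (fun l => Φ (r l))).toFinset.card ≤ n := by
      rw [Set.toFinset_range]
      exact le_trans (Finset.card_image_le) (by simp)
    have h4 : Module.finrank k W = Module.finrank k (Fin t → k) := by
      rw [hWtop]
      exact finrank_top k (Fin t → k)
    omega
  -- coefficient matrices
  have hCex : ∀ i : Fin t, ∃ c : Fin n → MvPolynomial (Fin m) k,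
      (∑ l, c l * r l) = monomial (mg i) (1:k) := by
    intro i
    have hmem : monomial (mg i) (1:k) ∈ Ideal.span (Set.range r) := by
      rw [← hQr]; exact (mg_min i).1
    have hmem' : monomial (mg i) (1:k) ∈
        Submodule.span (MvPolynomial (Fin m) k) (Set.range r) := hmem
    rw [Submodule.mem_span_range_iff_exists_fun] at hmem'
    obtain ⟨c, hc⟩ := hmem' 
    exact ⟨c, by simpa [smul_eq_mul] using hc⟩
  choose C hC using hCex
  have hQmg : Q = Ideal.span (Set.range (fun i => monomial (mg i) (1:k))) := by
    have h2 := span_minGens (k := k) T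
    rw [hQdef, h2, MSpan]
    congr 1
    ext p
    constructor
    · rintro ⟨w, hw, rfl⟩
      obtain ⟨i, rfl⟩ := mg_surj w hw
      exact ⟨i, rfl⟩
    · rintro ⟨i, rfl⟩
      exact ⟨mg i, mg_min i, rfl⟩
  have hDex : ∀ l : Fin n, ∃ d : Fin t → MvPolynomial (Fin m) k,
      (∑ i, d i * monomial (mg i) (1:k)) = r l := by
    intro l
    have h1 : r l ∈ Q := by rw [hQr]; exact Ideal.subset_span ⟨l, rfl⟩
    rw [hQmg] at h1
    have h1' : r l ∈ Submodule.span (MvPolynomial (Fin m) k)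
        (Set.range (fun i => monomial (mg i) (1:k))) := h1
    rw [Submodule.mem_span_range_iff_exists_fun] at h1'
    obtain ⟨d, hd⟩ := h1' 
    exact ⟨d, by simpa [smul_eq_mul] using hd⟩
  choose D hD using hDex
  have hQtop : Q ≠ ⊤ := by
    intro h
    exact hv.2 j₀ hjv (h ▸ Submodule.mem_top)
  letI : Nontrivial (MvPolynomial (Fin m) k ⧸ Q) := Ideal.Quotient.nontrivial_iff.mpr hQtop
  set π := Ideal.Quotient.mk Q with hπ
  -- sum manipulation helper
  have hsum_push : ∀ (γ : Fin t → MvPolynomial (Fin m) k),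
      (∑ l', (∑ i, γ i * C i l') * r l') = ∑ i, γ i * monomial (mg i) (1:k) := by
    intro γ
    have e1 : ∀ l' : Fin n, (∑ i, γ i * C i l') * r l' = ∑ i, γ i * (C i l' * r l') := by
      intro l'
      rw [Finset.sum_mul]
      exact Finset.sum_congr rfl (fun i _ => by ring)
    rw [Finset.sum_congr rfl (fun l' _ => e1 l'), Finset.sum_comm]
    refine Finset.sum_congr rfl (fun i _ => ?_)
    rw [← Finset.mul_sum, ← hC i]
  -- the congruence D * C ≡ 1 mod Q
  have hDC : ∀ l l' : Fin n, (∑ i, D l i * C i l') - (if l = l' then 1 else 0) ∈ Q := by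
    intro l l'
    have hrel : (∑ l'', ((∑ i, D l i * C i l'') - (if l = l'' then 1 else 0)) * r l'') = 0 := by
      have hsplit : ∀ l'' : Fin n,
          ((∑ i, D l i * C i l'') - (if l = l'' then 1 else 0)) * r l''
            = (∑ i, D l i * C i l'') * r l'' - (if l = l'' then r l'' else 0) := by
        intro l''
        by_cases h : l = l''
        · subst h; rw [if_pos rfl, if_pos rfl]; ring
        · rw [if_neg h, if_neg h]; ring
      rw [Finset.sum_congr rfl (fun l'' _ => hsplit l''), Finset.sum_sub_distrib,
        hsum_push (fun i => D l i), Finset.sum_ite_eq, if_pos (Finset.mem_univ l), hD l,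
        sub_self]
    exact hQr ▸ (koszul_rel n r hwr _ hrel l')
  -- n ≤ t
  have hnt : n ≤ t := by
    set Cb : Matrix (Fin t) (Fin n) (MvPolynomial (Fin m) k ⧸ Q) :=
      Matrix.of (fun i l => π (C i l)) with hCb
    set Db : Matrix (Fin n) (Fin t) (MvPolynomial (Fin m) k ⧸ Q) :=
      Matrix.of (fun l i => π (D l i)) with hDb
    have hDbCb : Db * Cb = 1 := by
      ext l l'
      rw [Matrix.mul_apply, Matrix.one_apply]
      have h0 : π ((∑ i, D l i * C i l') - (if l = l' then 1 else 0)) = 0 :=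
        Ideal.Quotient.eq_zero_iff_mem.mpr (hDC l l')
      rw [map_sub, sub_eq_zero] at h0
      have h1 : (∑ i, Db l i * Cb i l') = π (∑ i, D l i * C i l') := by
        rw [map_sum]
        exact Finset.sum_congr rfl (fun i _ => (map_mul π _ _).symm)
      rw [h1, h0, apply_ite π, map_one, map_zero]
    have hinj : Function.Injective (Matrix.mulVecLin Cb) := by
      intro x y hxy
      have hxy' : Cb.mulVec x = Cb.mulVec y := by
        simpa [Matrix.mulVecLin_apply] using hxy
      have h2 : Db.mulVec (Cb.mulVec x) = Db.mulVec (Cb.mulVec y) := by rw [hxy']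
      rwa [Matrix.mulVec_mulVec, Matrix.mulVec_mulVec, hDbCb, Matrix.one_mulVec,
        Matrix.one_mulVec] at h2
    exact le_of_fin_injective _ (Matrix.mulVecLin Cb) hinj
  -- indices of u and v
  obtain ⟨iu, hiu⟩ := mg_surj u hu
  obtain ⟨iv, hiv⟩ := mg_surj v hv
  have hiuiv : iu ≠ iv := by
    intro h
    apply huv
    rw [← hiu, ← hiv, h]
  -- the Koszul relation between u and v
  set b0 : Fin m →₀ ℕ := v - (u - (u - v)) with hb0def
  set a0 : Fin m →₀ ℕ := u - (u - (u - v)) with ha0def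
  have hb0le : b0 ≤ v := by
    rw [Finsupp.le_def]
    intro j
    simp only [hb0def, Finsupp.tsub_apply]
    omega
  have hb0ne : b0 ≠ v := by
    intro h
    have := DFunLike.congr_fun h j₀
    simp only [hb0def, Finsupp.tsub_apply] at this
    omega
  have hsum_eq : b0 + u = a0 + v := by
    apply Finsupp.ext
    intro j
    simp only [hb0def, ha0def, Finsupp.add_apply, Finsupp.tsub_apply]
    omega
  set γ : Fin t → MvPolynomial (Fin m) k := fun i =>
    if i = iu then monomial b0 1 else if i = iv then -(monomial a0 (1:k)) else 0 with hγdef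
  have hγrel : (∑ i, γ i * monomial (mg i) (1:k)) = 0 := by
    have hterm : ∀ i, γ i * monomial (mg i) (1:k)
        = (if i = iu then monomial (b0 + u) (1:k) else 0)
          + (if i = iv then -(monomial (a0 + v) (1:k)) else 0) := by
      intro i
      by_cases h1 : i = iu
      · have hg : γ i = monomial b0 1 := by simp only [hγdef]; rw [if_pos h1]
        rw [hg, h1, hiu, monomial_mul, one_mul, if_pos rfl, if_neg hiuiv, add_zero]
      · by_cases h2 : i = iv
        · have hg : γ i = -(monomial a0 (1:k)) := by
            simp only [hγdef]; rw [if_neg h1, if_pos h2]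
          rw [hg, h2, hiv, neg_mul, monomial_mul, one_mul,
            if_neg (fun hh : iv = iu => hiuiv hh.symm), if_pos rfl, zero_add]
        · have hg : γ i = 0 := by simp only [hγdef]; rw [if_neg h1, if_neg h2]
          rw [hg, zero_mul, if_neg h1, if_neg h2, add_zero]
    rw [Finset.sum_congr rfl (fun i _ => hterm i), Finset.sum_add_distrib,
      Finset.sum_ite_eq' Finset.univ iu, Finset.sum_ite_eq' Finset.univ iv,
      if_pos (Finset.mem_univ iu), if_pos (Finset.mem_univ iv), hsum_eq,
      add_neg_cancel]
  have hγC : ∀ l, (∑ i, γ i * C i l) ∈ Q := by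
    intro l
    have hrel2 : (∑ l', (∑ i, γ i * C i l') * r l') = 0 := by
      rw [hsum_push γ, hγrel]
    exact hQr ▸ (koszul_rel n r hwr _ hrel2 l)
  have heq : t = n := le_antisymm htn hnt
  set ι : Fin t ≃ Fin n := finCongr heq with hι
  set C2 : Matrix (Fin t) (Fin t) (MvPolynomial (Fin m) k ⧸ Q) :=
    Matrix.of (fun i j => π (C i (ι j))) with hC2
  set D2 : Matrix (Fin t) (Fin t) (MvPolynomial (Fin m) k ⧸ Q) :=
    Matrix.of (fun j i => π (D (ι j) i)) with hD2
  have hD2C2 : D2 * C2 = 1 := by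
    ext j j'
    rw [Matrix.mul_apply, Matrix.one_apply]
    have h0 : π ((∑ i, D (ι j) i * C i (ι j')) - (if ι j = ι j' then 1 else 0)) = 0 :=
      Ideal.Quotient.eq_zero_iff_mem.mpr (hDC (ι j) (ι j'))
    rw [map_sub, sub_eq_zero] at h0
    have h1 : (∑ i, D2 j i * C2 i j') = π (∑ i, D (ι j) i * C i (ι j')) := by
      rw [map_sum]
      exact Finset.sum_congr rfl (fun i _ => (map_mul π _ _).symm)
    rw [h1, h0, apply_ite π, map_one, map_zero]
    congr 1
    simp [Equiv.apply_eq_iff_eq]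
  have hC2D2 : C2 * D2 = 1 := mul_eq_one_comm.mp hD2C2
  set γb : Fin t → (MvPolynomial (Fin m) k ⧸ Q) := fun i => π (γ i) with hγb
  have hγbC2 : Matrix.vecMul γb C2 = 0 := by
    funext j
    have h1 : Matrix.vecMul γb C2 j = π (∑ i, γ i * C i (ι j)) := by
      rw [map_sum, Matrix.vecMul, dotProduct]
      exact Finset.sum_congr rfl (fun i _ => (map_mul π _ _).symm)
    rw [h1, Ideal.Quotient.eq_zero_iff_mem.mpr (hγC (ι j))]
    rfl
  have hγb0 : γb = 0 := by
    calc γb = Matrix.vecMul γb (C2 * D2) := by rw [hC2D2, Matrix.vecMul_one]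
    _ = Matrix.vecMul (Matrix.vecMul γb C2) D2 := by rw [Matrix.vecMul_vecMul]
    _ = 0 := by rw [hγbC2]; exact Matrix.zero_vecMul D2
  have hbQ : monomial b0 (1:k) ∈ Q := by
    have h1 := congrFun hγb0 iu
    rw [hγb] at h1
    simp only [hγdef, if_pos rfl, Pi.zero_apply] at h1
    exact Ideal.Quotient.eq_zero_iff_mem.mp h1
  exact minGen_not_mem_of_lt hv hb0le hb0ne hbQ


lemma erase_apply'' (y j : Fin m) (a : Fin m →₀ ℕ) :
    (a.erase y) j = if j = y then 0 else a j := by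
  by_cases h : j = y
  · subst h; simp [Finsupp.erase_same]
  · rw [Finsupp.erase_ne h, if_neg h]

lemma exists_ne_zero_of_expDeg {a : Fin m →₀ ℕ} (h : 1 ≤ expDeg a) : ∃ j, a j ≠ 0 := by
  by_contra hc
  push_neg at hc
  rw [expDeg_eq_sum] at h
  have : (∑ j : Fin m, a j) = 0 := Finset.sum_eq_zero (fun j _ => hc j)
  omega

lemma expDeg_single (j : Fin m) : expDeg (Finsupp.single j (1:ℕ)) = 1 := by
  rw [expDeg_eq_sum]
  rw [Finset.sum_congr rfl (fun i _ => Finsupp.single_apply (a := j) (b := (1:ℕ)) (a' := i))]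
  rw [Finset.sum_ite_eq Finset.univ j (fun _ => (1:ℕ)), if_pos (Finset.mem_univ j)]


end NCIAux

set_option maxHeartbeats 3000000 in
open NCIAux in
/-- **Lemma.** In the situation of Notation (⋆) — `I` an NCI of height `c` with all associated
primes of height `c`, `xF_1, …, xF_n` the minimal generators divisible by `x`, `J` generated
by the remaining minimal generators lying in `(F_1, …, F_n)` — at most one of the `F_i` has
degree greater than one, and if `F_i` has degree greater than one then
`J ⊆ (F_1, …, F_{i-1}, F_{i+1}, …, F_n)` (in the paper, `i = n`). -/
theorem nci_at_most_one_nonlinear (k : Type) [Field k] (m : ℕ)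
    (I : Ideal (MvPolynomial (Fin m) k)) (c : ℕ) (t : Fin m)
    (hI : IsNCI I) (hht : idealHeight I = c)
    (hassoc : ∀ P ∈ associatedPrimes (MvPolynomial (Fin m) k)
      (MvPolynomial (Fin m) k ⧸ I), idealHeight P = c)
    (hsup : InSupport I t)
    (n : ℕ) (hn : 2 ≤ n) (f : Fin n → (Fin m →₀ ℕ)) (hinj : Function.Injective f)
    (hfx : ∀ i, f i t = 0)
    (hgens : ∀ a, (IsMinGen I a ∧ a t ≠ 0) ↔ ∃ i, a = Finsupp.single t 1 + f i)
    (J : Ideal (MvPolynomial (Fin m) k))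
    (hJ : J = Ideal.span ((fun a => monomial a (1 : k)) ''
      {a | IsMinGen I a ∧ a t = 0 ∧
        monomial a (1 : k) ∈
          Ideal.span (Set.range fun i => monomial (f i) (1 : k))})) :
    (∀ i j, 1 < expDeg (f i) → 1 < expDeg (f j) → i = j) ∧
    (∀ i, 1 < expDeg (f i) →
      J ≤ Ideal.span ((fun j => monomial (f j) (1 : k)) '' {j | j ≠ i})) := by
  classical
  obtain ⟨⟨A, hAsq, hIA⟩, hdeg2, _hnotCI, hsub1⟩ := hI
  have hIM : I = (MSpan A : Ideal (MvPolynomial (Fin m) k)) := hIA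
  -- basic membership facts for I
  have hImem : ∀ {b : Fin m →₀ ℕ}, monomial b (1:k) ∈ I ↔ ∃ w ∈ A, w ≤ b := by
    intro b; rw [hIM]; exact mono_mem
  have hIup : ∀ {a b : Fin m →₀ ℕ}, monomial a (1:k) ∈ I → a ≤ b → monomial b (1:k) ∈ I := by
    intro a b ha hab; rw [hIM] at ha ⊢; exact mono_mem_of_le ha hab
  have hInot : ∀ {v b : Fin m →₀ ℕ}, IsMinGen I v → b ≤ v → b ≠ v →
      monomial b (1:k) ∉ I := by
    intro v b hv hb hne
    rw [hIM] at hv ⊢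
    exact minGen_not_mem_of_lt hv hb hne
  have hIsq : ∀ {a : Fin m →₀ ℕ}, IsMinGen I a → ∀ j, a j ≤ 1 := by
    intro a ha j
    obtain ⟨w, hw, hwa⟩ := hImem.mp ha.1
    have hwe : w = a := by
      by_contra hne
      exact hInot ha hwa hne (hImem.mpr ⟨w, hw, le_rfl⟩)
    subst hwe
    exact hAsq w hw j
  -- notation
  set ex : Fin m →₀ ℕ := Finsupp.single t 1 with hex
  have hext : ex t = 1 := by rw [hex, Finsupp.single_apply, if_pos rfl]
  have hexj : ∀ j, j ≠ t → ex j = 0 := by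
    intro j hj; rw [hex, Finsupp.single_apply, if_neg (fun h => hj h.symm)]
  -- minimal generators divisible by t
  have hFmin : ∀ i, IsMinGen I (ex + f i) := fun i => ((hgens _).mpr ⟨i, rfl⟩).1
  have hFt : ∀ i, (ex + f i) t = 1 := by
    intro i; rw [Finsupp.add_apply, hext, hfx i]
  have hFnotI : ∀ i, monomial (f i) (1:k) ∉ I := by
    intro i
    have h2 := (hFmin i).2 t (by rw [hFt]; omega)
    have h3 : ex + f i - Finsupp.single t 1 = f i := by
      rw [← hex]; exact add_tsub_cancel_left ex (f i)
    rwa [h3] at h2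
  have hfdeg1 : ∀ i, 1 ≤ expDeg (f i) := by
    intro i
    have := hdeg2 _ (hFmin i)
    rw [expDeg_add, hex, expDeg_single] at this
    omega
  have hfsq : ∀ i j, f i j ≤ 1 := by
    intro i j
    have := hIsq (hFmin i) j
    rw [Finsupp.add_apply] at this
    omega
  have hminchar : ∀ a, IsMinGen I a → a t ≠ 0 → ∃ i, a = ex + f i := by
    intro a ha hat
    exact (hgens a).mp ⟨ha, hat⟩
  -- description of subOne
  have hsubMS : ∀ y : Fin m, subOne I y
      = (MSpan ((fun a => Finsupp.erase y a) '' {a | IsMinGen I a}) :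
          Ideal (MvPolynomial (Fin m) k)) := by
    intro y
    rw [subOne, MSpan, Set.image_image]
  have hsubsq : ∀ y : Fin m, ∀ w ∈ ((fun a => Finsupp.erase y a) '' {a | IsMinGen I a}),
      ∀ j, w j ≤ 1 := by
    rintro y _ ⟨a, ha, rfl⟩ j
    rw [erase_apply'']
    split_ifs
    · omega
    · exact hIsq ha j
  have hQmem : ∀ (y : Fin m) (b : Fin m →₀ ℕ),
      monomial b (1:k) ∈ subOne I y ↔ ∃ a, IsMinGen I a ∧ Finsupp.erase y a ≤ b := by
    intro y b
    rw [hsubMS, mono_mem]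
    constructor
    · rintro ⟨w, ⟨a, ha, rfl⟩, hle⟩
      exact ⟨a, ha, hle⟩
    · rintro ⟨a, ha, hle⟩
      exact ⟨Finsupp.erase y a, ⟨a, ha, rfl⟩, hle⟩
  have hQimg : ∀ (y : Fin m) (a : Fin m →₀ ℕ), IsMinGen I a →
      monomial (Finsupp.erase y a) (1:k) ∈ subOne I y := by
    intro y a ha
    exact (hQmem y _).mpr ⟨a, ha, le_rfl⟩
  -- erasing `t` or another variable from the generators x·F_l
  have herase_t : ∀ p, Finsupp.erase t (ex + f p) = f p := by
    intro p
    apply Finsupp.ext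
    intro j
    rw [erase_apply'']
    by_cases hj : j = t
    · subst hj; rw [if_pos rfl, hfx p]
    · rw [if_neg hj, Finsupp.add_apply, hexj j hj, zero_add]
  have herase_y : ∀ (y : Fin m), y ≠ t → ∀ p,
      Finsupp.erase y (ex + f p) = ex + Finsupp.erase y (f p) := by
    intro y hy p
    apply Finsupp.ext
    intro j
    rw [erase_apply'', Finsupp.add_apply, Finsupp.add_apply, erase_apply'']
    by_cases hj : j = y
    · subst hj; rw [if_pos rfl, if_pos rfl, hexj j hy, zero_add]
    · rw [if_neg hj, if_neg hj]
  -- each F_l is a minimal generator of I(t=1)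
  have hF_minQ0 : ∀ l, IsMinGen (subOne I t) (f l) := by
    intro l
    constructor
    · rw [← herase_t l]
      exact hQimg t _ (hFmin l)
    · intro j hj hmem
      have hjt : j ≠ t := fun h => hj (by rw [h]; exact hfx l)
      obtain ⟨a, ha, hle⟩ := (hQmem t _).mp hmem
      by_cases hat : a t ≠ 0
      · obtain ⟨p, rfl⟩ := hminchar a ha hat
        rw [herase_t p] at hle
        have hle2 : ex + f p ≤ ex + f l - Finsupp.single j 1 := by
          rw [Finsupp.le_def] at hle ⊢
          intro j'
          have h1 := hle j'
          simp only [hex, Finsupp.add_apply, Finsupp.tsub_apply, Finsupp.single_apply] at h1 ⊢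
          split_ifs at h1 ⊢ <;> omega
        have hmemI : monomial (ex + f l - Finsupp.single j 1) (1:k) ∈ I :=
          hIup (hFmin p).1 hle2
        exact (hFmin l).2 j (by rw [Finsupp.add_apply, hexj j hjt, zero_add]; exact hj) hmemI
      · push_neg at hat
        have hea : Finsupp.erase t a = a :=
          Finsupp.erase_of_notMem_support (Finsupp.notMem_support_iff.mpr hat)
        rw [hea] at hle
        have hafl : a ≤ f l := le_trans hle (sub_single_le _ _)
        exact hFnotI l (hIup ha.1 hafl)
  -- F_l's are pairwise coprime
  have hcop : ∀ l p, l ≠ p → ∀ j, f l j = 0 ∨ f p j = 0 := by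
    intro l p hlp j
    by_contra hc
    push_neg at hc
    have hci0 : IsCI (MSpan ((fun a => Finsupp.erase t a) '' {a | IsMinGen I a}) :
        Ideal (MvPolynomial (Fin m) k)) := by
      rw [← hsubMS t]; exact hsub1 t hsup
    have hul : IsMinGen (MSpan ((fun a => Finsupp.erase t a) '' {a | IsMinGen I a}) :
        Ideal (MvPolynomial (Fin m) k)) (f l) := by
      rw [← hsubMS t]; exact hF_minQ0 l
    have hup : IsMinGen (MSpan ((fun a => Finsupp.erase t a) '' {a | IsMinGen I a}) :
        Ideal (MvPolynomial (Fin m) k)) (f p) := by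
      rw [← hsubMS t]; exact hF_minQ0 p
    exact ci_no_common_var (hsubsq t) hci0 hul hup
      (fun h => hlp (hinj h)) hc.1 hc.2
  -- helpers for applying ci_no_common_var at a variable y
  have hsupy : ∀ (i : Fin n) (y : Fin m), f i y ≠ 0 → y ≠ t ∧ InSupport I y := by
    intro i y hy
    have hyt : y ≠ t := fun h => hy (by rw [h]; exact hfx i)
    exact ⟨hyt, ⟨ex + f i, hFmin i, by
      rw [Finsupp.add_apply, hexj y hyt, zero_add]; exact hy⟩⟩
  have hcivar : ∀ (y : Fin m), InSupport I y → ∀ (u v : Fin m →₀ ℕ),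
      IsMinGen (subOne I y) u → IsMinGen (subOne I y) v → u ≠ v →
      ∀ (j₀ : Fin m), u j₀ ≠ 0 → v j₀ ≠ 0 → False := by
    intro y hsupp u v hu hv huv j₀ h1 h2
    have hci : IsCI (MSpan ((fun a => Finsupp.erase y a) '' {a | IsMinGen I a}) :
        Ideal (MvPolynomial (Fin m) k)) := by
      rw [← hsubMS y]; exact hsub1 y hsupp
    have hu' : IsMinGen (MSpan ((fun a => Finsupp.erase y a) '' {a | IsMinGen I a}) :
        Ideal (MvPolynomial (Fin m) k)) u := by rw [← hsubMS y]; exact hu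
    have hv' : IsMinGen (MSpan ((fun a => Finsupp.erase y a) '' {a | IsMinGen I a}) :
        Ideal (MvPolynomial (Fin m) k)) v := by rw [← hsubMS y]; exact hv
    exact ci_no_common_var (hsubsq y) hci hu' hv' huv h1 h2
  -- the key minimal generator x·(F_i/y) of I(y=1)
  have keyU : ∀ (i : Fin n) (y : Fin m), f i y ≠ 0 →
      IsMinGen (subOne I y) (ex + Finsupp.erase y (f i)) := by
    intro i y hy
    have hyt : y ≠ t := (hsupy i y hy).1
    constructor
    · rw [← herase_y y hyt i]
      exact hQimg y _ (hFmin i)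
    · intro j hj hmem
      obtain ⟨a, ha, hle⟩ := (hQmem y _).mp hmem
      by_cases hat : a t ≠ 0
      · obtain ⟨l, rfl⟩ := hminchar a ha hat
        rw [herase_y y hyt l] at hle
        by_cases hli : l = i
        · subst hli
          have h1 := Finsupp.le_def.mp hle j
          rw [Finsupp.tsub_apply, Finsupp.single_apply, if_pos rfl] at h1
          omega
        · have hfly : f l y = 0 := by
            rcases hcop l i hli y with h | h
            · exact h
            · exact absurd h hy
          have hefl : Finsupp.erase y (f l) = f l :=
            Finsupp.erase_of_notMem_support (Finsupp.notMem_support_iff.mpr hfly)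
          rw [hefl] at hle
          have hlefi : ex + f l ≤ ex + f i := by
            rw [Finsupp.le_def] at hle ⊢
            intro j'
            have h1 := hle j'
            simp only [Finsupp.add_apply, Finsupp.tsub_apply, Finsupp.single_apply,
              erase_apply''] at h1 ⊢
            split_ifs at h1 ⊢ <;> omega
          have hne : ex + f l ≠ ex + f i := by
            intro h
            have h2 := DFunLike.congr_fun h y
            simp only [Finsupp.add_apply, hexj y hyt, zero_add] at h2
            exact hy (h2 ▸ hfly)
          exact hInot (hFmin i) hlefi hne (hFmin l).1
      · push_neg at hat
        have hale : a ≤ f i := by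
          rw [Finsupp.le_def]
          intro j'
          by_cases hj'y : j' = y
          · subst hj'y
            have h1 := hIsq ha j'
            have h2 := hfsq i j'
            omega
          · by_cases hj't : j' = t
            · subst hj't
              rw [hat]
              omega
            · have h1 := Finsupp.le_def.mp hle j'
              simp only [erase_apply'', if_neg hj'y, Finsupp.add_apply, Finsupp.tsub_apply,
                Finsupp.single_apply, hexj j' hj't] at h1
              split_ifs at h1 <;> omega
        exact hFnotI i (hIup ha.1 hale)
  -- C1 : a nonlinear F_i divides no x-free minimal generator
  have C1 : ∀ (i : Fin n) (G : Fin m →₀ ℕ), 1 < expDeg (f i) → IsMinGen I G →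
      G t = 0 → f i ≤ G → False := by
    intro i G hdi hG hGt hfiG
    obtain ⟨y, hy⟩ := exists_ne_zero_of_expDeg (hfdeg1 i)
    have hyt : y ≠ t := (hsupy i y hy).1
    have hfiy1 : f i y = 1 := by
      have := hfsq i y
      omega
    have hfi_split : f i = Finsupp.single y 1 + Finsupp.erase y (f i) := by
      apply Finsupp.ext
      intro j
      rw [Finsupp.add_apply, Finsupp.single_apply, erase_apply'']
      by_cases hj : j = y
      · subst hj; rw [if_pos rfl, if_pos rfl]; omega
      · rw [if_neg (fun h => hj h.symm), if_neg hj, zero_add]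
    have hF'deg : 1 ≤ expDeg (Finsupp.erase y (f i)) := by
      have h1 : expDeg (f i) = 1 + expDeg (Finsupp.erase y (f i)) := by
        conv_lhs => rw [hfi_split]
        rw [expDeg_add, expDeg_single]
      omega
    obtain ⟨y', hy'⟩ := exists_ne_zero_of_expDeg hF'deg
    have hy'y : y' ≠ y := by
      intro h
      rw [h, erase_apply'', if_pos rfl] at hy'
      exact hy' rfl
    have hfiy' : f i y' ≠ 0 := by
      rw [erase_apply'', if_neg hy'y] at hy'
      exact hy'
    have hy't : y' ≠ t := (hsupy i y' hfiy').1
    have hu := keyU i y hy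
    have hGy : G y ≠ 0 := by
      have := Finsupp.le_def.mp hfiG y
      omega
    have hv : IsMinGen (subOne I y) (Finsupp.erase y G) := by
      constructor
      · exact hQimg y G hG
      · intro j hj hmem
        have hjy : j ≠ y := by
          intro h
          rw [h, erase_apply'', if_pos rfl] at hj
          exact hj rfl
        obtain ⟨a, ha, hle⟩ := (hQmem y _).mp hmem
        by_cases hat : a t ≠ 0
        · obtain ⟨l, rfl⟩ := hminchar a ha hat
          have h1 := Finsupp.le_def.mp hle t
          rw [herase_y y hyt l] at h1
          have hL : (ex + Finsupp.erase y (f l)) t = 1 := by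
            rw [Finsupp.add_apply, hext, erase_apply'',
              if_neg (fun h : t = y => hyt h.symm), hfx l]
          rw [hL] at h1
          have h2 : (Finsupp.erase y G) t = 0 := by
            rw [erase_apply'']
            split_ifs <;> omega
          have h3 := Finsupp.le_def.mp (sub_single_le (Finsupp.erase y G) j) t
          omega
        · push_neg at hat
          have ha_le : a ≤ G - Finsupp.single j 1 := by
            rw [Finsupp.le_def]
            intro j'
            by_cases hj'y : j' = y
            · have h1 := hIsq ha j'
              have hGy' : G j' ≠ 0 := by rw [hj'y]; exact hGy
              have hsj : Finsupp.single j (1:ℕ) j' = 0 := by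
                rw [Finsupp.single_apply, if_neg (fun h => hjy (h.trans hj'y))]
              rw [Finsupp.tsub_apply, hsj]
              omega
            · have h1 := Finsupp.le_def.mp hle j'
              simp only [erase_apply'', if_neg hj'y, Finsupp.tsub_apply,
                Finsupp.single_apply] at h1 ⊢
              split_ifs at h1 ⊢ <;> omega
          have hGj : G j ≠ 0 := by
            rw [erase_apply'', if_neg hjy] at hj
            exact hj
          exact hG.2 j hGj (hIup ha.1 ha_le)
    have hune : ex + Finsupp.erase y (f i) ≠ Finsupp.erase y G := by
      intro h
      have h2 := DFunLike.congr_fun h t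
      simp only [Finsupp.add_apply, hext, erase_apply'',
        if_neg (fun hh : t = y => hyt hh.symm)] at h2
      omega
    refine hcivar y (hsupy i y hy).2 _ _ hu hv hune y' ?_ ?_
    · rw [Finsupp.add_apply, hexj y' hy't]
      rw [erase_apply'', if_neg hy'y]
      omega
    · rw [erase_apply'', if_neg hy'y]
      have := Finsupp.le_def.mp hfiG y'
      omega
  have expDeg_zero : expDeg (0 : Fin m →₀ ℕ) = 0 := by
    rw [expDeg_eq_sum]
    simp
  -- C2 : no two distinct nonlinear F's
  have C2 : ∀ i j, i ≠ j → 1 < expDeg (f i) → 1 < expDeg (f j) → False := by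
    intro i j hij hdi hdj
    obtain ⟨y, hy⟩ := exists_ne_zero_of_expDeg (hfdeg1 i)
    have hyt : y ≠ t := (hsupy i y hy).1
    have hfjy : f j y = 0 := by
      rcases hcop i j hij y with h | h
      · exact absurd h hy
      · exact h
    have hu := keyU i y hy
    have hfi_split : f i = Finsupp.single y 1 + Finsupp.erase y (f i) := by
      apply Finsupp.ext
      intro j'
      rw [Finsupp.add_apply, Finsupp.single_apply, erase_apply'']
      by_cases hj' : j' = y
      · subst hj'
        have := hfsq i j'
        rw [if_pos rfl, if_pos rfl]
        omega
      · rw [if_neg (fun h => hj' h.symm), if_neg hj', zero_add]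
    have hF'deg : 1 ≤ expDeg (Finsupp.erase y (f i)) := by
      have h1 : expDeg (f i) = 1 + expDeg (Finsupp.erase y (f i)) := by
        conv_lhs => rw [hfi_split]
        rw [expDeg_add, expDeg_single]
      omega
    obtain ⟨y'', hy''⟩ := exists_ne_zero_of_expDeg hF'deg
    have hy''y : y'' ≠ y := by
      intro h
      rw [h, erase_apply'', if_pos rfl] at hy''
      exact hy'' rfl
    have hfiy'' : f i y'' ≠ 0 := by
      rw [erase_apply'', if_neg hy''y] at hy''
      exact hy''
    have hfjy'' : f j y'' = 0 := by
      rcases hcop i j hij y'' with h | h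
      · exact absurd h hfiy''
      · exact h
    have hF'nlefj : ¬ (Finsupp.erase y (f i) ≤ f j) := by
      intro h
      have h1 := Finsupp.le_def.mp h y''
      rw [erase_apply'', if_neg hy''y] at h1
      omega
    -- x·F_j is a minimal generator of I(y=1)
    have hw : IsMinGen (subOne I y) (ex + f j) := by
      constructor
      · have he : Finsupp.erase y (ex + f j) = ex + f j := by
          apply Finsupp.erase_of_notMem_support
          apply Finsupp.notMem_support_iff.mpr
          rw [Finsupp.add_apply, hexj y hyt, hfjy]
          rfl
        rw [← he]
        exact hQimg y _ (hFmin j)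
      · intro j₁ hj₁ hmem
        have hj₁y : j₁ ≠ y := by
          intro h
          rw [h, Finsupp.add_apply, hexj y hyt, hfjy] at hj₁
          exact hj₁ rfl
        obtain ⟨a, ha, hle⟩ := (hQmem y _).mp hmem
        by_cases hat : a t ≠ 0
        · obtain ⟨l, rfl⟩ := hminchar a ha hat
          rw [herase_y y hyt l] at hle
          by_cases hli : l = i
          · subst hli
            apply hF'nlefj
            rw [Finsupp.le_def]
            intro j'
            have h1 := Finsupp.le_def.mp hle j'
            simp only [Finsupp.add_apply, Finsupp.tsub_apply, Finsupp.single_apply,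
              erase_apply''] at h1 ⊢
            split_ifs at h1 ⊢ <;> omega
          · have hfly : f l y = 0 := by
              rcases hcop l i hli y with h | h
              · exact h
              · exact absurd h hy
            have hefl : Finsupp.erase y (f l) = f l :=
              Finsupp.erase_of_notMem_support (Finsupp.notMem_support_iff.mpr hfly)
            rw [hefl] at hle
            have hle2 : ex + f l ≤ ex + f j := le_trans hle (sub_single_le _ _)
            have hne : ex + f l ≠ ex + f j := by
              intro h
              have h1 := Finsupp.le_def.mp hle j₁
              rw [h, Finsupp.tsub_apply, Finsupp.single_apply, if_pos rfl] at h1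
              omega
            exact hInot (hFmin j) hle2 hne (hFmin l).1
        · push_neg at hat
          have ha_le : a ≤ Finsupp.single y 1 + f j := by
            rw [Finsupp.le_def]
            intro j'
            by_cases hj'y : j' = y
            · have h1 := hIsq ha j'
              rw [Finsupp.add_apply, Finsupp.single_apply, if_pos hj'y.symm]
              omega
            · by_cases hj't : j' = t
              · rw [Finsupp.add_apply]
                rw [hj't, hat]
                omega
              · have h1 := Finsupp.le_def.mp hle j'
                simp only [erase_apply'', if_neg hj'y, Finsupp.add_apply, Finsupp.tsub_apply,
                  Finsupp.single_apply, hexj j' hj't] at h1 ⊢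
                split_ifs at h1 ⊢ <;> omega
          by_cases haeq : a = Finsupp.single y 1 + f j
          · refine absurd (C1 j a hdj ha ?_ ?_) (fun h => h)
            · rw [haeq, Finsupp.add_apply, Finsupp.single_apply,
                if_neg (fun h : y = t => hyt h), hfx j]
            · rw [haeq]
              exact le_add_self
          · by_cases hay : a y = 0
            · have hafj : a ≤ f j := by
                rw [Finsupp.le_def]
                intro j'
                by_cases hj'y : j' = y
                · rw [hj'y, hay]
                  omega
                · have h1 := Finsupp.le_def.mp ha_le j'
                  rw [Finsupp.add_apply, Finsupp.single_apply,
                    if_neg (fun h : y = j' => hj'y h.symm), zero_add] at h1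
                  exact h1
              exact hFnotI j (hIup ha.1 hafj)
            · -- a = y·a' with a' ≤ f j properly; analyse a in I(x=1)
              have hay1 : a y = 1 := by
                have := hIsq ha y
                omega
              have ha'le : ∀ j', j' ≠ y → a j' ≤ f j j' := by
                intro j' hj'y
                have h1 := Finsupp.le_def.mp ha_le j'
                rw [Finsupp.add_apply, Finsupp.single_apply,
                  if_neg (fun h : y = j' => hj'y h.symm), zero_add] at h1
                exact h1
              have ha'ex : ∃ y₂, y₂ ≠ y ∧ a y₂ ≠ 0 := by
                by_contra hc
                push_neg at hc
                have haeq2 : a = Finsupp.single y 1 := by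
                  apply Finsupp.ext
                  intro j'
                  rw [Finsupp.single_apply]
                  by_cases h : j' = y
                  · rw [if_pos h.symm, h, hay1]
                  · rw [if_neg (fun hh : y = j' => h hh.symm)]
                    exact hc j' h
                have hd := hdeg2 a ha
                rw [haeq2, expDeg_single] at hd
                omega
              obtain ⟨y₂, hy₂y, hy₂⟩ := ha'ex
              have hfjy₂ : f j y₂ ≠ 0 := by
                have := ha'le y₂ hy₂y
                omega
              by_cases haQ0 : IsMinGen (subOne I t) a
              · exact hcivar t hsup a (f j) haQ0 (hF_minQ0 j)
                  (fun h => by rw [h] at hay1; rw [hfjy] at hay1; exact one_ne_zero hay1.symm)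
                  y₂ hy₂ hfjy₂
              · have hamem : monomial a (1:k) ∈ subOne I t := by
                  have he : Finsupp.erase t a = a :=
                    Finsupp.erase_of_notMem_support (Finsupp.notMem_support_iff.mpr hat)
                  rw [← he]
                  exact hQimg t a ha
                have hexj₂ : ∃ j₂, a j₂ ≠ 0 ∧
                    monomial (a - Finsupp.single j₂ 1) (1:k) ∈ subOne I t := by
                  by_contra hc
                  push_neg at hc
                  exact haQ0 ⟨hamem, fun j₂ h2 => hc j₂ h2⟩
                obtain ⟨j₂, hj₂, hmem₂⟩ := hexj₂
                obtain ⟨a₂, ha₂, hle₂⟩ := (hQmem t _).mp hmem₂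
                by_cases hat₂ : a₂ t ≠ 0
                · obtain ⟨l, rfl⟩ := hminchar a₂ ha₂ hat₂
                  rw [herase_t l] at hle₂
                  have hfl_le_a : f l ≤ a := le_trans hle₂ (sub_single_le _ _)
                  by_cases hli : l = i
                  · have h1 := Finsupp.le_def.mp hfl_le_a y''
                    have h2 := ha'le y'' (fun h => hy''y h)
                    rw [hli] at h1
                    omega
                  · have hfly : f l y = 0 := by
                      rcases hcop l i hli y with h | h
                      · exact h
                      · exact absurd h hy
                    have hfl_lefj : f l ≤ f j := by
                      rw [Finsupp.le_def]
                      intro j'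
                      by_cases hj'y : j' = y
                      · rw [hj'y, hfly]
                        omega
                      · have h1 := Finsupp.le_def.mp hfl_le_a j'
                        have h2 := ha'le j' hj'y
                        omega
                    by_cases hlj : l = j
                    · apply haeq
                      refine le_antisymm ha_le ?_
                      rw [Finsupp.le_def]
                      intro j'
                      by_cases hj'y : j' = y
                      · rw [Finsupp.add_apply, Finsupp.single_apply, if_pos hj'y.symm, hj'y,
                          hay1, hfjy]
                      · have h1 := Finsupp.le_def.mp hfl_le_a j'
                        rw [hlj] at h1
                        rw [Finsupp.add_apply, Finsupp.single_apply,
                          if_neg (fun h : y = j' => hj'y h.symm), zero_add]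
                        exact h1
                    · have hfl0 : f l = 0 := by
                        apply Finsupp.ext
                        intro j'
                        rcases hcop l j hlj j' with h | h
                        · exact h
                        · have := Finsupp.le_def.mp hfl_lefj j'
                          simp only [Finsupp.coe_zero, Pi.zero_apply]
                          omega
                      have hd := hfdeg1 l
                      rw [hfl0, expDeg_zero] at hd
                      omega
                · push_neg at hat₂
                  have he₂ : Finsupp.erase t a₂ = a₂ :=
                    Finsupp.erase_of_notMem_support (Finsupp.notMem_support_iff.mpr hat₂)
                  rw [he₂] at hle₂
                  have hne₂ : a₂ ≠ a := by
                    intro h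
                    have h1 := Finsupp.le_def.mp hle₂ j₂
                    rw [h, Finsupp.tsub_apply, Finsupp.single_apply, if_pos rfl] at h1
                    omega
                  exact hInot ha (le_trans hle₂ (sub_single_le _ _)) hne₂ ha₂.1
    -- u and w are distinct minimal generators of I(y=1) both divisible by x=t
    have hune : ex + Finsupp.erase y (f i) ≠ ex + f j := by
      intro h
      exact hF'nlefj (le_of_eq (add_left_cancel h))
    refine hcivar y (hsupy i y hy).2 _ _ hu hw hune t ?_ ?_
    · rw [Finsupp.add_apply, hext, erase_apply'',
        if_neg (fun h : t = y => hyt h.symm), hfx i]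
      omega
    · rw [hFt j]
      omega
  -- conclusion
  refine ⟨?_, ?_⟩
  · intro i j hdi hdj
    by_contra hij
    exact C2 i j hij hdi hdj
  · intro i hdi
    rw [hJ, Ideal.span_le]
    rintro _ ⟨a, ⟨hamin, hat0, haspan⟩, rfl⟩
    have hdvd : ∃ l, f l ≤ a := by
      have h1 : (Set.range fun i => monomial (f i) (1:k))
          = (fun e => monomial e (1:k)) '' (Set.range f) := by
        rw [← Set.range_comp]
        rfl
      rw [h1] at haspan
      have h2 : monomial a (1:k) ∈ (MSpan (Set.range f) : Ideal (MvPolynomial (Fin m) k)) :=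
        haspan
      obtain ⟨w, ⟨l, rfl⟩, hle⟩ := mono_mem.mp h2
      exact ⟨l, hle⟩
    obtain ⟨l, hl⟩ := hdvd
    have hli : l ≠ i := by
      intro h
      exact C1 i a hdi hamin hat0 (by rw [← h]; exact hl)
    have himg : (fun j => monomial (f j) (1:k)) '' {j | j ≠ i}
        = (fun e => monomial e (1:k)) '' (f '' {j | j ≠ i}) := by
      rw [Set.image_image]
    rw [himg]
    have : monomial a (1:k) ∈ (MSpan (f '' {j | j ≠ i}) : Ideal (MvPolynomial (Fin m) k)) :=
      mono_mem.mpr ⟨f l, ⟨l, hli, rfl⟩, hl⟩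
    exact this


end
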